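/- Let N, K be positive natural numbers, Π : Fin K → ℝ, Λ : Fin K → Fin K → ℝ, p : Fin (N+1) → Fin K → ℝ. Define the path weight W(y) := Π(y(0)) · p(0, y(0)) · Π_{j=1}^{N} ( Λ(y(j−1), y(j)) · p(j, y(j)) ) for y : Fin (N+1) → Fin K, and define α, β by the forward recursion α(0,k) = Π(k)·p(0,k), α(i+1,k) = (Σ_j α(i,j)·Λ(j,k))·p(i+1,k) and backward recursion β(N,k) = 1, β(i,k) = Σ_j Λ(k,j)·p(i+1,j)·β(i+1,j). Then for every i ≤ N and k ∈ Fin K, α(i,k) · β(i,k) = Σ_{y : Fin (N+1) → Fin K, y(i) = k} W(y). -/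

import Mathlib

open Finset

namespace FBAux

variable {N K : ℕ}

/-- Transition-emission factor at step `j`. -/
def T (Lam : Fin K → Fin K → ℝ) (p : Fin (N + 1) → Fin K → ℝ)
    (y : Fin (N + 1) → Fin K) (j : Fin N) : ℝ :=
  Lam (y j.castSucc) (y j.succ) * p j.succ (y j.succ)

/-- Prefix weight up to position `i`. -/
def Front (Pi0 : Fin K → ℝ) (Lam : Fin K → Fin K → ℝ) (p : Fin (N + 1) → Fin K → ℝ)
    (i : Fin (N + 1)) (y : Fin (N + 1) → Fin K) : ℝ :=
  Pi0 (y 0) * p 0 (y 0) *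
    ∏ j ∈ univ.filter (fun j : Fin N => (j : ℕ) < (i : ℕ)), T Lam p y j

/-- Suffix weight from position `i`. -/
def Back (Lam : Fin K → Fin K → ℝ) (p : Fin (N + 1) → Fin K → ℝ)
    (i : Fin (N + 1)) (y : Fin (N + 1) → Fin K) : ℝ :=
  ∏ j ∈ univ.filter (fun j : Fin N => (i : ℕ) ≤ (j : ℕ)), T Lam p y j

/-- Paths whose coordinates from `i` on are all pinned to `k`. -/
def FS (i : Fin (N + 1)) (k : Fin K) : Finset (Fin (N + 1) → Fin K) :=
  univ.filter (fun y => ∀ c : Fin (N + 1), (i : ℕ) ≤ (c : ℕ) → y c = k)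

/-- Paths agreeing with `y0` on all coordinates up to `i`. -/
def Ext (i : Fin (N + 1)) (y0 : Fin (N + 1) → Fin K) : Finset (Fin (N + 1) → Fin K) :=
  univ.filter (fun y => ∀ c : Fin (N + 1), (c : ℕ) ≤ (i : ℕ) → y c = y0 c)

variable (Pi0 : Fin K → ℝ) (Lam : Fin K → Fin K → ℝ) (p : Fin (N + 1) → Fin K → ℝ)

lemma Front_congr {i : Fin (N + 1)} {y z : Fin (N + 1) → Fin K}
    (h : ∀ c : Fin (N + 1), (c : ℕ) ≤ (i : ℕ) → y c = z c) :
    Front Pi0 Lam p i y = Front Pi0 Lam p i z := by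
  unfold Front
  rw [h 0 (Nat.zero_le _)]
  congr 1
  refine Finset.prod_congr rfl fun j hj => ?_
  simp only [mem_filter, mem_univ, true_and] at hj
  unfold T
  rw [h j.castSucc (by simp; omega), h j.succ (by simp; omega)]

lemma Front_split (i : Fin N) (y : Fin (N + 1) → Fin K) :
    Front Pi0 Lam p i.succ y = Front Pi0 Lam p i.castSucc y * T Lam p y i := by
  unfold Front
  have hfil : univ.filter (fun j : Fin N => (j : ℕ) < ((i.succ : Fin (N + 1)) : ℕ))
      = insert i (univ.filter (fun j : Fin N => (j : ℕ) < ((i.castSucc : Fin (N + 1)) : ℕ))) := by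
    ext j
    simp [Fin.ext_iff, Nat.lt_succ_iff_lt_or_eq, or_comm]
    rw [Fin.le_iff_val_le_val, Fin.lt_iff_val_lt_val]; omega
  rw [hfil, Finset.prod_insert (by simp)]
  ring

lemma Back_split (i : Fin N) (y : Fin (N + 1) → Fin K) :
    Back Lam p i.castSucc y = T Lam p y i * Back Lam p i.succ y := by
  unfold Back
  have hfil : univ.filter (fun j : Fin N => ((i.castSucc : Fin (N + 1)) : ℕ) ≤ (j : ℕ))
      = insert i (univ.filter (fun j : Fin N => ((i.succ : Fin (N + 1)) : ℕ) ≤ (j : ℕ))) := by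
    ext j
    simp only [mem_filter, mem_univ, true_and, mem_insert, Fin.coe_castSucc, Fin.val_succ,
      Fin.ext_iff]
    omega
  rw [hfil, Finset.prod_insert (by simp)]

lemma W_split (W : (Fin (N + 1) → Fin K) → ℝ)
    (hW : ∀ y, W y = Pi0 (y 0) * p 0 (y 0)
      * ∏ j : Fin N, (Lam (y j.castSucc) (y j.succ) * p j.succ (y j.succ)))
    (i : Fin (N + 1)) (y : Fin (N + 1) → Fin K) :
    W y = Front Pi0 Lam p i y * Back Lam p i y := by
  have hnot : (univ.filter fun j : Fin N => (i : ℕ) ≤ (j : ℕ))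
      = univ.filter (fun j : Fin N => ¬ (j : ℕ) < (i : ℕ)) := by
    simp [not_lt]
  rw [hW y]
  unfold Front Back T
  rw [hnot, ← Finset.prod_filter_mul_prod_filter_not univ
    (fun j : Fin N => (j : ℕ) < (i : ℕ))
    (fun j : Fin N => Lam (y j.castSucc) (y j.succ) * p j.succ (y j.succ))]
  ring

lemma FL (α : Fin (N + 1) → Fin K → ℝ)
    (hα0 : ∀ k, α 0 k = Pi0 k * p 0 k)
    (hα : ∀ (i : Fin N) (k : Fin K),
      α i.succ k = (∑ j, α i.castSucc j * Lam j k) * p i.succ k) :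
    ∀ (i : Fin (N + 1)) (k : Fin K), α i k = ∑ y ∈ FS i k, Front Pi0 Lam p i y := by
  intro i
  induction i using Fin.induction with
  | zero =>
    intro k
    have hset : FS (0 : Fin (N + 1)) k = {fun _ => k} := by
      ext y
      simp only [FS, mem_filter, mem_univ, true_and, mem_singleton]
      constructor
      · intro h; funext c; exact h c (Nat.zero_le _)
      · intro h c _; rw [h]
    have hemp : (univ.filter (fun j : Fin N => (j : ℕ) < ((0 : Fin (N + 1)) : ℕ))) = ∅ := by
      simp
    rw [hset, Finset.sum_singleton, hα0]
    simp [Front, hemp]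
  | succ i ih =>
    intro k
    rw [hα i k]
    have h1 : ∀ y ∈ FS i.succ k,
        Front Pi0 Lam p i.succ y
          = Front Pi0 Lam p i.castSucc y * (Lam (y i.castSucc) k * p i.succ k) := by
      intro y hy
      have hy' : y i.succ = k := by
        simp only [FS, mem_filter, mem_univ, true_and] at hy
        exact hy i.succ le_rfl
      rw [Front_split]
      unfold T
      rw [hy']
    have key : ∑ y ∈ FS i.succ k, Front Pi0 Lam p i.succ y
        = ∑ j : Fin K, α i.castSucc j * (Lam j k * p i.succ k) := by
      rw [Finset.sum_congr rfl h1]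
      rw [← Finset.sum_fiberwise_of_maps_to
        (g := fun y : Fin (N + 1) → Fin K => y i.castSucc)
        (t := (univ : Finset (Fin K))) (fun y _ => mem_univ _)]
      refine Finset.sum_congr rfl fun j _ => ?_
      have inner : ∑ y ∈ (FS i.succ k).filter (fun y => y i.castSucc = j),
            Front Pi0 Lam p i.castSucc y * (Lam (y i.castSucc) k * p i.succ k)
          = ∑ z ∈ FS i.castSucc j,
            Front Pi0 Lam p i.castSucc z * (Lam j k * p i.succ k) := by
        refine Finset.sum_nbij'
          (fun y => fun c => if (c : ℕ) ≤ ((i.castSucc : Fin (N + 1)) : ℕ) then y c else j)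
          (fun z => fun c => if (c : ℕ) ≤ ((i.castSucc : Fin (N + 1)) : ℕ) then z c else k)
          ?_ ?_ ?_ ?_ ?_
        · intro y hy
          simp only [FS, mem_filter, mem_univ, true_and] at hy ⊢
          intro c hc
          by_cases h : (c : ℕ) ≤ ((i.castSucc : Fin (N + 1)) : ℕ)
          · rw [if_pos h]
            have hceq : c = i.castSucc := Fin.ext (le_antisymm h hc)
            rw [hceq]
            exact hy.2
          · rw [if_neg h]
        · intro z hz
          simp only [FS, mem_filter, mem_univ, true_and] at hz ⊢
          refine ⟨fun c hc => ?_, ?_⟩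
          · have h : ¬ (c : ℕ) ≤ ((i.castSucc : Fin (N + 1)) : ℕ) := by
              simp only [Fin.val_succ, Fin.coe_castSucc] at hc ⊢; omega
            rw [if_neg h]
          · rw [if_pos le_rfl]
            exact hz i.castSucc le_rfl
        · intro y hy
          simp only [FS, mem_filter, mem_univ, true_and] at hy
          funext c
          by_cases h : (c : ℕ) ≤ ((i.castSucc : Fin (N + 1)) : ℕ)
          · simp only [if_pos h]
          · simp only [if_neg h]
            have hc : ((i.succ : Fin (N + 1)) : ℕ) ≤ (c : ℕ) := by
              simp only [Fin.val_succ, Fin.coe_castSucc] at h ⊢; omega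
            exact (hy.1 c hc).symm
        · intro z hz
          simp only [FS, mem_filter, mem_univ, true_and] at hz
          funext c
          by_cases h : (c : ℕ) ≤ ((i.castSucc : Fin (N + 1)) : ℕ)
          · simp only [if_pos h]
          · simp only [if_neg h]
            exact (hz c (by omega)).symm
        · intro y hy
          simp only [FS, mem_filter, mem_univ, true_and] at hy
          have hFr : Front Pi0 Lam p i.castSucc y
              = Front Pi0 Lam p i.castSucc
                (fun c => if (c : ℕ) ≤ ((i.castSucc : Fin (N + 1)) : ℕ) then y c else j) :=
            Front_congr Pi0 Lam p (fun c hc => (if_pos hc).symm)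
          rw [hy.2, hFr]
      rw [inner, ← Finset.sum_mul, ← ih j]
    rw [key, Finset.sum_mul]
    exact Finset.sum_congr rfl fun j _ => (mul_assoc _ _ _)

lemma BL (β : Fin (N + 1) → Fin K → ℝ)
    (hβN : ∀ k, β (Fin.last N) k = 1)
    (hβ : ∀ (i : Fin N) (k : Fin K),
      β i.castSucc k = ∑ j, Lam k j * p i.succ j * β i.succ j) :
    ∀ (i : Fin (N + 1)) (y0 : Fin (N + 1) → Fin K),
      β i (y0 i) = ∑ y ∈ Ext i y0, Back Lam p i y := by
  intro i
  induction i using Fin.reverseInduction with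
  | last =>
    intro y0
    have hset : Ext (Fin.last N) y0 = {y0} := by
      ext y
      simp only [Ext, mem_filter, mem_univ, true_and, mem_singleton]
      constructor
      · intro h; funext c; exact h c (by simpa using c.is_le)
      · intro h c _; rw [h]
    rw [hset, Finset.sum_singleton, hβN]
    unfold Back
    rw [show (univ.filter (fun j : Fin N => ((Fin.last N : Fin (N + 1)) : ℕ) ≤ (j : ℕ)))
        = (∅ : Finset (Fin N)) from by
      ext j
      simp only [mem_filter, mem_univ, true_and, Fin.val_last, notMem_empty, iff_false]
      omega]
    simp
  | cast i ih =>
    intro y0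
    rw [hβ i (y0 i.castSucc)]
    have step1 : ∑ y ∈ Ext i.castSucc y0, Back Lam p i.castSucc y
        = ∑ y ∈ Ext i.castSucc y0, T Lam p y i * Back Lam p i.succ y :=
      Finset.sum_congr rfl fun y _ => Back_split Lam p i y
    rw [step1]
    rw [← Finset.sum_fiberwise_of_maps_to
      (g := fun y : Fin (N + 1) → Fin K => y i.succ)
      (t := (univ : Finset (Fin K))) (fun y _ => mem_univ _)]
    refine Finset.sum_congr rfl fun j _ => ?_
    have hfib : (Ext i.castSucc y0).filter (fun y => y i.succ = j)
        = Ext i.succ (Function.update y0 i.succ j) := by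
      ext y
      simp only [Ext, mem_filter, mem_univ, true_and]
      constructor
      · rintro ⟨h1, h2⟩ c hc
        by_cases hcc : c = i.succ
        · subst hcc
          rw [h2, Function.update_self]
        · have hle : (c : ℕ) ≤ ((i.castSucc : Fin (N + 1)) : ℕ) := by
            have : (c : ℕ) ≠ ((i.succ : Fin (N + 1)) : ℕ) := fun h => hcc (Fin.ext h)
            simp only [Fin.val_succ, Fin.coe_castSucc] at hc this ⊢
            omega
          rw [Function.update_of_ne hcc]
          exact h1 c hle
      · intro h
        have hne : i.castSucc ≠ i.succ := by
          simp only [ne_eq, Fin.ext_iff, Fin.coe_castSucc, Fin.val_succ]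
          omega
        refine ⟨fun c hc => ?_, ?_⟩
        · have hcc : c ≠ i.succ := by
            intro h'
            subst h'
            simp only [Fin.val_succ, Fin.coe_castSucc] at hc
            omega
          have := h c (by simp only [Fin.val_succ, Fin.coe_castSucc] at hc ⊢; omega)
          rwa [Function.update_of_ne hcc] at this
        · have := h i.succ le_rfl
          rwa [Function.update_self] at this
    rw [hfib]
    have hTval : ∀ y ∈ Ext i.succ (Function.update y0 i.succ j),
        T Lam p y i * Back Lam p i.succ y
          = Lam (y0 i.castSucc) j * p i.succ j * Back Lam p i.succ y := by
      intro y hy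
      simp only [Ext, mem_filter, mem_univ, true_and] at hy
      have hne : i.castSucc ≠ i.succ := by
        simp only [ne_eq, Fin.ext_iff, Fin.coe_castSucc, Fin.val_succ]
        omega
      have h1 : y i.castSucc = y0 i.castSucc := by
        have := hy i.castSucc (by simp only [Fin.val_succ, Fin.coe_castSucc]; omega)
        rwa [Function.update_of_ne hne] at this
      have h2 : y i.succ = j := by
        have := hy i.succ le_rfl
        rwa [Function.update_self] at this
      unfold T
      rw [h1, h2]
    rw [Finset.sum_congr rfl hTval, ← Finset.mul_sum, ← ih (Function.update y0 i.succ j),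
      Function.update_self]

end FBAux

/-- Equation (B.3) of the paper (numerator): the product of forward and backward
variables equals the total weight of all latent-state paths `y` with `y i = k`. -/
theorem forward_backward_product_path_sum (N K : ℕ) (hN : 0 < N) (hK : 0 < K)
    (Pi0 : Fin K → ℝ) (Lam : Fin K → Fin K → ℝ) (p : Fin (N + 1) → Fin K → ℝ)
    (W : (Fin (N + 1) → Fin K) → ℝ)
    (hW : ∀ y, W y = Pi0 (y 0) * p 0 (y 0)
      * ∏ j : Fin N, (Lam (y j.castSucc) (y j.succ) * p j.succ (y j.succ)))
    (α : Fin (N + 1) → Fin K → ℝ)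
    (hα0 : ∀ k, α 0 k = Pi0 k * p 0 k)
    (hα : ∀ (i : Fin N) (k : Fin K),
      α i.succ k = (∑ j, α i.castSucc j * Lam j k) * p i.succ k)
    (β : Fin (N + 1) → Fin K → ℝ)
    (hβN : ∀ k, β (Fin.last N) k = 1)
    (hβ : ∀ (i : Fin N) (k : Fin K),
      β i.castSucc k = ∑ j, Lam k j * p i.succ j * β i.succ j) :
    ∀ (i : Fin (N + 1)) (k : Fin K),
      α i k * β i k
        = ∑ y ∈ Finset.univ.filter (fun y : Fin (N + 1) → Fin K => y i = k), W y := by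
  classical
  intro i k
  symm
  calc ∑ y ∈ Finset.univ.filter (fun y : Fin (N + 1) → Fin K => y i = k), W y
      = ∑ y ∈ Finset.univ.filter (fun y : Fin (N + 1) → Fin K => y i = k),
          FBAux.Front Pi0 Lam p i y * FBAux.Back Lam p i y :=
        Finset.sum_congr rfl fun y _ => FBAux.W_split Pi0 Lam p W hW i y
    _ = ∑ z ∈ FBAux.FS i k, ∑ y ∈ (Finset.univ.filter
          (fun y : Fin (N + 1) → Fin K => y i = k)).filter
          (fun y => (fun c : Fin (N + 1) => if (c : ℕ) ≤ (i : ℕ) then y c else k) = z),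
          FBAux.Front Pi0 Lam p i y * FBAux.Back Lam p i y := by
        rw [Finset.sum_fiberwise_of_maps_to]
        intro y hy
        simp only [Finset.mem_filter, Finset.mem_univ, true_and] at hy
        simp only [FBAux.FS, Finset.mem_filter, Finset.mem_univ, true_and]
        intro c hc
        by_cases h : (c : ℕ) ≤ (i : ℕ)
        · rw [if_pos h, show c = i from Fin.ext (le_antisymm h hc), hy]
        · rw [if_neg h]
    _ = ∑ z ∈ FBAux.FS i k, FBAux.Front Pi0 Lam p i z * β i k := by
        refine Finset.sum_congr rfl fun z hz => ?_
        have hzk : z i = k := by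
          simp only [FBAux.FS, Finset.mem_filter, Finset.mem_univ, true_and] at hz
          exact hz i le_rfl
        have hfib : (Finset.univ.filter
            (fun y : Fin (N + 1) → Fin K => y i = k)).filter
            (fun y => (fun c : Fin (N + 1) => if (c : ℕ) ≤ (i : ℕ) then y c else k) = z) = FBAux.Ext i z := by
          ext y
          simp only [Finset.mem_filter, Finset.mem_univ, true_and, FBAux.Ext]
          constructor
          · rintro ⟨h1, h2⟩ c hc
            simpa only [if_pos hc] using congrFun h2 c
          · intro h
            refine ⟨by rw [h i le_rfl, hzk], ?_⟩
            funext c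
            by_cases hc : (c : ℕ) ≤ (i : ℕ)
            · simp only [if_pos hc]; exact h c hc
            · simp only [if_neg hc]
              simp only [FBAux.FS, Finset.mem_filter, Finset.mem_univ, true_and] at hz
              exact (hz c (by omega)).symm
        rw [hfib]
        have hFr : ∀ y ∈ FBAux.Ext i z,
            FBAux.Front Pi0 Lam p i y * FBAux.Back Lam p i y
              = FBAux.Front Pi0 Lam p i z * FBAux.Back Lam p i y := by
          intro y hy
          simp only [FBAux.Ext, Finset.mem_filter, Finset.mem_univ, true_and] at hy
          rw [FBAux.Front_congr Pi0 Lam p hy]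
        rw [Finset.sum_congr rfl hFr, ← Finset.mul_sum,
          ← FBAux.BL Lam p β hβN hβ i z, hzk]
    _ = α i k * β i k := by
        rw [← Finset.sum_mul, ← FBAux.FL Pi0 Lam p α hα0 hα i k]
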